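/- Let (H, ⇀, ↼) be a matched pair of actions on a Hopf algebra H. Then for all x, y ∈ H, S(x ↼ y) = S(x₁) ↼ (x₂ ⇀ y). -/

import Mathlib

open TensorProduct Coalgebra HopfAlgebra LinearMap

noncomputable section

variable (k H : Type*) [CommRing k] [Ring H] [HopfAlgebra k H]

/-- `f` is a left `H`-module coalgebra action of the Hopf algebra `H` on itself. -/
structure IsLeftModCoalgAction (f : H ⊗[k] H →ₗ[k] H) : Prop where
  one_act : ∀ a : H, f (1 ⊗ₜ a) = a
  mul_act : ∀ x y a : H, f ((x * y) ⊗ₜ a) = f (x ⊗ₜ f (y ⊗ₜ a))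
  counit_act : ∀ x a : H, counit (R := k) (f (x ⊗ₜ a)) = counit (R := k) x * counit (R := k) a
  comul_act : ∀ (x a : H) {ι κ : Type*} (rx : Coalgebra.Repr k x ι) (ra : Coalgebra.Repr k a κ),
      comul (R := k) (f (x ⊗ₜ a)) =
        ∑ i ∈ rx.index, ∑ j ∈ ra.index,
          f (rx.left i ⊗ₜ ra.left j) ⊗ₜ[k] f (rx.right i ⊗ₜ ra.right j)

/-- `g` is a right `H`-module coalgebra action of the Hopf algebra `H` on itself. -/
structure IsRightModCoalgAction (g : H ⊗[k] H →ₗ[k] H) : Prop where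
  act_one : ∀ x : H, g (x ⊗ₜ 1) = x
  act_mul : ∀ x a b : H, g (x ⊗ₜ (a * b)) = g (g (x ⊗ₜ a) ⊗ₜ b)
  counit_act : ∀ x a : H, counit (R := k) (g (x ⊗ₜ a)) = counit (R := k) x * counit (R := k) a
  comul_act : ∀ (x a : H) {ι κ : Type*} (rx : Coalgebra.Repr k x ι) (ra : Coalgebra.Repr k a κ),
      comul (R := k) (g (x ⊗ₜ a)) =
        ∑ i ∈ rx.index, ∑ j ∈ ra.index,
          g (rx.left i ⊗ₜ ra.left j) ⊗ₜ[k] g (rx.right i ⊗ₜ ra.right j)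

universe ul1 ul2 ur1 ur2

/-- `(H, f, g)` (written `(H, ⇀, ↼)`) is a matched pair of actions on the Hopf algebra `H`:
`f` is a left module coalgebra action, `g` a right module coalgebra action, satisfying the
matched pair conditions (MP1)–(MP5) and the extra condition `xy = (x₁ ⇀ y₁)(x₂ ↼ y₂)`. -/
structure IsMatchedPairOfActions (f g : H ⊗[k] H →ₗ[k] H) : Prop where
  left_action : IsLeftModCoalgAction.{_, _, ul1, ul2} k H f
  right_action : IsRightModCoalgAction.{_, _, ur1, ur2} k H g
  mp1 : ∀ (x a b : H) {ι κ : Type*} (rx : Coalgebra.Repr k x ι) (ra : Coalgebra.Repr k a κ),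
      f (x ⊗ₜ (a * b)) =
        ∑ i ∈ rx.index, ∑ j ∈ ra.index,
          f (rx.left i ⊗ₜ ra.left j) * f (g (rx.right i ⊗ₜ ra.right j) ⊗ₜ b)
  mp2 : ∀ x : H, f (x ⊗ₜ 1) = counit (R := k) x • (1 : H)
  mp3 : ∀ (x y a : H) {ι κ : Type*} (ry : Coalgebra.Repr k y ι) (ra : Coalgebra.Repr k a κ),
      g ((x * y) ⊗ₜ a) =
        ∑ i ∈ ry.index, ∑ j ∈ ra.index,
          g (x ⊗ₜ f (ry.left i ⊗ₜ ra.left j)) * g (ry.right i ⊗ₜ ra.right j)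
  mp4 : ∀ a : H, g ((1 : H) ⊗ₜ a) = counit (R := k) a • (1 : H)
  mp5 : ∀ (x a : H) {ι κ : Type*} (rx : Coalgebra.Repr k x ι) (ra : Coalgebra.Repr k a κ),
      (∑ i ∈ rx.index, ∑ j ∈ ra.index,
        f (rx.left i ⊗ₜ ra.left j) ⊗ₜ[k] g (rx.right i ⊗ₜ ra.right j)) =
      ∑ i ∈ rx.index, ∑ j ∈ ra.index,
        f (rx.right i ⊗ₜ ra.right j) ⊗ₜ[k] g (rx.left i ⊗ₜ ra.left j)
  mp_mul : ∀ (x y : H) {ι κ : Type*} (rx : Coalgebra.Repr k x ι) (ry : Coalgebra.Repr k y κ),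
      x * y = ∑ i ∈ rx.index, ∑ j ∈ ry.index,
        f (rx.left i ⊗ₜ ry.left j) * g (rx.right i ⊗ₜ ry.right j)

/-- The braiding operator `r(x ⊗ y) = (x₁ ⇀ y₁) ⊗ (x₂ ↼ y₂)` associated to the pair `(f, g)`. -/
def braidOp (f g : H ⊗[k] H →ₗ[k] H) : H ⊗[k] H →ₗ[k] H ⊗[k] H :=
  TensorProduct.map f g ∘ₗ (tensorTensorTensorComm k H H H H).toLinearMap
    ∘ₗ TensorProduct.map (comul (R := k)) (comul (R := k))


section AuxSum

variable {α β γ δ M : Type*} [AddCommMonoid M]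

lemma sum4_swap (s : Finset α) (t : Finset β) (u : α → Finset γ) (v : β → Finset δ)
    (F : α → γ → β → δ → M) :
    (∑ i ∈ s, ∑ m ∈ t, ∑ j ∈ u i, ∑ n ∈ v m, F i j m n)
    = ∑ m ∈ t, ∑ n ∈ v m, ∑ i ∈ s, ∑ j ∈ u i, F i j m n := by
  rw [Finset.sum_comm]
  refine Finset.sum_congr rfl fun m _ => ?_
  calc (∑ i ∈ s, ∑ j ∈ u i, ∑ n ∈ v m, F i j m n)
      = ∑ i ∈ s, ∑ n ∈ v m, ∑ j ∈ u i, F i j m n :=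
        Finset.sum_congr rfl fun i _ => Finset.sum_comm
    _ = ∑ n ∈ v m, ∑ i ∈ s, ∑ j ∈ u i, F i j m n := Finset.sum_comm

lemma sum4_swap' (s : Finset α) (t : Finset β) (u : α → Finset γ) (v : β → Finset δ)
    (F : α → γ → β → δ → M) :
    (∑ m ∈ t, ∑ n ∈ v m, ∑ i ∈ s, ∑ j ∈ u i, F i j m n)
    = ∑ i ∈ s, ∑ j ∈ u i, ∑ m ∈ t, ∑ n ∈ v m, F i j m n := by
  calc (∑ m ∈ t, ∑ n ∈ v m, ∑ i ∈ s, ∑ j ∈ u i, F i j m n)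
      = ∑ m ∈ t, ∑ i ∈ s, ∑ n ∈ v m, ∑ j ∈ u i, F i j m n :=
        Finset.sum_congr rfl fun m _ => Finset.sum_comm
    _ = ∑ i ∈ s, ∑ m ∈ t, ∑ n ∈ v m, ∑ j ∈ u i, F i j m n := Finset.sum_comm
    _ = ∑ i ∈ s, ∑ m ∈ t, ∑ j ∈ u i, ∑ n ∈ v m, F i j m n :=
        Finset.sum_congr rfl fun i _ => Finset.sum_congr rfl fun m _ => Finset.sum_comm
    _ = ∑ i ∈ s, ∑ j ∈ u i, ∑ m ∈ t, ∑ n ∈ v m, F i j m n :=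
        Finset.sum_congr rfl fun i _ => Finset.sum_comm

end AuxSum

section Aux

variable {k H}

universe u_univ

/-- A representation of `comul x` whose index type lives in an arbitrary universe. -/
def reprOfUniv (x : H) :
    Coalgebra.Repr k x (ULift.{u_univ} (Fin (Coalgebra.Repr.arbitrary k x).index.card)) :=
  let r := Coalgebra.Repr.arbitrary k x
  { index := Finset.univ
    left := fun i => r.left (r.index.equivFin.symm i.down)
    right := fun i => r.right (r.index.equivFin.symm i.down)
    eq := by
      rw [← r.eq]
      rw [← Finset.sum_coe_sort r.index (fun a => r.left a ⊗ₜ[k] r.right a)]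
      rw [← Equiv.sum_comp r.index.equivFin.symm
        (fun a => r.left a.1 ⊗ₜ[k] r.right a.1)]
      exact Equiv.sum_comp (Equiv.ulift.{u_univ}).symm _ |>.symm }

lemma sum_repr_apply {M : Type*} [AddCommGroup M] [Module k M]
    (Φ : (H ⊗[k] H) ⊗[k] (H ⊗[k] H) →ₗ[k] M) {a b : H}
    {ι κ : Type*} (r : Coalgebra.Repr k a ι) (s : Coalgebra.Repr k b κ) :
    (∑ i ∈ r.index, ∑ j ∈ s.index,
        Φ ((r.left i ⊗ₜ r.right i) ⊗ₜ (s.left j ⊗ₜ s.right j)))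
    = Φ ((comul (R := k) a) ⊗ₜ (comul (R := k) b)) := by
  rw [← r.eq, ← s.eq]
  simp [sum_tmul, tmul_sum, map_sum]
  exact Finset.sum_comm

lemma sum_repr_eq₂ {M : Type*} [AddCommGroup M] [Module k M]
    (Φ : (H ⊗[k] H) ⊗[k] (H ⊗[k] H) →ₗ[k] M) {a b : H}
    {ι ι' κ κ' : Type*} (ra : Coalgebra.Repr k a ι) (ra' : Coalgebra.Repr k a ι')
    (rb : Coalgebra.Repr k b κ) (rb' : Coalgebra.Repr k b κ') :
    (∑ i ∈ ra.index, ∑ j ∈ rb.index,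
        Φ ((ra.left i ⊗ₜ ra.right i) ⊗ₜ (rb.left j ⊗ₜ rb.right j)))
    = ∑ i ∈ ra'.index, ∑ j ∈ rb'.index,
        Φ ((ra'.left i ⊗ₜ ra'.right i) ⊗ₜ (rb'.left j ⊗ₜ rb'.right j)) :=
  (sum_repr_apply Φ ra rb).trans (sum_repr_apply Φ ra' rb').symm

lemma apply_sum_smul {M : Type*} [AddCommGroup M] [Module k M] (φ : H ⊗[k] H →ₗ[k] M)
    {ι₁ ι₂ : Type*} (s : Finset ι₁) (t : Finset ι₂) (c : ι₁ → k) (d : ι₂ → k)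
    (u : ι₁ → H) (v : ι₂ → H) :
    φ ((∑ i ∈ s, c i • u i) ⊗ₜ (∑ m ∈ t, d m • v m))
      = ∑ i ∈ s, ∑ m ∈ t, c i • d m • φ (u i ⊗ₜ v m) := by
  rw [sum_tmul, map_sum]
  refine Finset.sum_congr rfl fun i _ => ?_
  rw [tmul_sum, map_sum]
  refine Finset.sum_congr rfl fun m _ => ?_
  rw [← smul_tmul', tmul_smul, map_smul, map_smul]

/-- `U(x ⊗ y) = ∑ g(S(x₁) ⊗ f(x₂ ⊗ y))` as a linear map. -/
def Umap (f g : H ⊗[k] H →ₗ[k] H) : H ⊗[k] H →ₗ[k] H :=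
  g ∘ₗ TensorProduct.map (antipode (R := k)) f
    ∘ₗ (TensorProduct.assoc k H H H).toLinearMap
    ∘ₗ (Coalgebra.comul (R := k) (A := H)).rTensor H

lemma Umap_tmul (f g : H ⊗[k] H →ₗ[k] H) (x y : H) {ι : Type*} (r : Coalgebra.Repr k x ι) :
    Umap f g (x ⊗ₜ y)
      = ∑ i ∈ r.index, g (antipode (R := k) (r.left i) ⊗ₜ f (r.right i ⊗ₜ y)) := by
  simp only [Umap, LinearMap.comp_apply, LinearMap.rTensor_tmul]
  rw [← r.eq]
  simp [sum_tmul, map_sum]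

lemma sum_counit_smul_right (x : H) {ι : Type*} (r : Coalgebra.Repr k x ι) :
    ∑ i ∈ r.index, counit (R := k) (r.left i) • r.right i = x := by
  have h0 := Coalgebra.sum_counit_tmul_eq (R := k) r
  have h1 := congrArg (TensorProduct.lid k H) h0
  rw [map_sum] at h1
  simp only [TensorProduct.lid_tmul] at h1
  simpa using h1

lemma sum_counit_smul_left (x : H) {ι : Type*} (r : Coalgebra.Repr k x ι) :
    ∑ i ∈ r.index, counit (R := k) (r.right i) • r.left i = x := by
  have h0 := Coalgebra.sum_tmul_counit_eq (R := k) r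
  have h1 := congrArg (TensorProduct.rid k H) h0
  rw [map_sum] at h1
  simp only [TensorProduct.rid_tmul] at h1
  simpa using h1

lemma tri_swap (B : H →ₗ[k] H →ₗ[k] H) (χ : H →ₗ[k] H) (x : H) {ι : Type*} {κ₁ κ₂ : ι → Type*}
    (r : Coalgebra.Repr k x ι)
    (ρ₁ : ∀ i, Coalgebra.Repr k (r.left i) (κ₁ i)) (ρ₂ : ∀ i, Coalgebra.Repr k (r.right i) (κ₂ i)) :
    (∑ i ∈ r.index, ∑ j ∈ (ρ₁ i).index,
        B ((ρ₁ i).left j) ((ρ₁ i).right j) * χ (r.right i))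
    = ∑ i ∈ r.index, ∑ j ∈ (ρ₂ i).index,
        B (r.left i) ((ρ₂ i).left j) * χ ((ρ₂ i).right j) := by
  have h0 := Coalgebra.sum_tmul_tmul_eq (R := k) r ρ₁ ρ₂
  have h1 := congrArg (TensorProduct.lift ((TensorProduct.lift.equiv (.id k) H H H).toLinearMap ∘ₗ
      ((B.compr₂ (LinearMap.mul k H)).compr₂ (LinearMap.lcomp k H χ)))) h0
  simpa [map_sum] using h1

lemma comul_act' (g : H ⊗[k] H →ₗ[k] H) (hg : IsRightModCoalgAction k H g)
    (x a : H) {ι κ : Type*} (rx : Coalgebra.Repr k x ι) (ra : Coalgebra.Repr k a κ) :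
    comul (R := k) (g (x ⊗ₜ a)) =
      ∑ i ∈ rx.index, ∑ j ∈ ra.index,
        g (rx.left i ⊗ₜ ra.left j) ⊗ₜ[k] g (rx.right i ⊗ₜ ra.right j) := by
  rw [hg.comul_act x a (reprOfUniv x) (reprOfUniv a)]
  have h1 := sum_repr_eq₂ (TensorProduct.map g g ∘ₗ
      (tensorTensorTensorComm k H H H H).toLinearMap)
    (reprOfUniv x) rx (reprOfUniv a) ra
  simpa using h1

lemma mp3' (f g : H ⊗[k] H →ₗ[k] H) (h : IsMatchedPairOfActions k H f g)
    (s y a : H) {ι κ : Type*} (ry : Coalgebra.Repr k y ι) (ra : Coalgebra.Repr k a κ) :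
    g ((s * y) ⊗ₜ a) =
      ∑ i ∈ ry.index, ∑ j ∈ ra.index,
        g (s ⊗ₜ f (ry.left i ⊗ₜ ra.left j)) * g (ry.right i ⊗ₜ ra.right j) := by
  rw [h.mp3 s y a (reprOfUniv y) (reprOfUniv a)]
  have h1 := sum_repr_eq₂ (LinearMap.mul' k H ∘ₗ
      TensorProduct.map (g ∘ₗ TensorProduct.mk k H H s ∘ₗ f) g ∘ₗ
      (tensorTensorTensorComm k H H H H).toLinearMap)
    (reprOfUniv y) ry (reprOfUniv a) ra
  simpa using h1

lemma convB (f g : H ⊗[k] H →ₗ[k] H) (h : IsMatchedPairOfActions k H f g)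
    (a b : H) {ι κ : Type*} (ra : Coalgebra.Repr k a ι) (rb : Coalgebra.Repr k b κ) :
    (∑ i ∈ ra.index, ∑ m ∈ rb.index,
        g (ra.left i ⊗ₜ rb.left m) * antipode (R := k) (g (ra.right i ⊗ₜ rb.right m)))
      = (counit (R := k) a * counit (R := k) b) • (1 : H) := by
  let R : Coalgebra.Repr k (g (a ⊗ₜ b)) (ι × κ) :=
    { index := ra.index ×ˢ rb.index
      left := fun p => g (ra.left p.1 ⊗ₜ rb.left p.2)
      right := fun p => g (ra.right p.1 ⊗ₜ rb.right p.2)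
      eq := by
        rw [Finset.sum_product]
        exact (comul_act' g h.right_action a b ra rb).symm }
  have h1 := HopfAlgebra.sum_mul_antipode_eq_smul (R := k) R
  rw [Finset.sum_product] at h1
  rw [h1, h.right_action.counit_act]

lemma convA (f g : H ⊗[k] H →ₗ[k] H) (h : IsMatchedPairOfActions k H f g)
    (a b : H) {ι κ : Type*} (ra : Coalgebra.Repr k a ι) (rb : Coalgebra.Repr k b κ) :
    (∑ i ∈ ra.index, ∑ m ∈ rb.index,
        Umap f g (ra.left i ⊗ₜ rb.left m) * g (ra.right i ⊗ₜ rb.right m))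
      = (counit (R := k) a * counit (R := k) b) • (1 : H) := by
  set ρ : ∀ i, Coalgebra.Repr k (ra.left i) (H × H) := fun i => ℛ k (ra.left i) with hρ
  set ρ' : ∀ i, Coalgebra.Repr k (ra.right i) (H × H) := fun i => ℛ k (ra.right i) with hρ'
  calc
    (∑ i ∈ ra.index, ∑ m ∈ rb.index,
        Umap f g (ra.left i ⊗ₜ rb.left m) * g (ra.right i ⊗ₜ rb.right m))
      = ∑ m ∈ rb.index, ∑ i ∈ ra.index, ∑ j ∈ (ρ i).index,
          g (antipode (R := k) ((ρ i).left j) ⊗ₜ f ((ρ i).right j ⊗ₜ rb.left m))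
            * g (ra.right i ⊗ₜ rb.right m) := by
        rw [Finset.sum_comm]
        refine Finset.sum_congr rfl fun m _ => Finset.sum_congr rfl fun i _ => ?_
        rw [Umap_tmul f g _ _ (ρ i), Finset.sum_mul]
    _ = ∑ m ∈ rb.index, ∑ i ∈ ra.index, ∑ j ∈ (ρ' i).index,
          g (antipode (R := k) (ra.left i) ⊗ₜ f ((ρ' i).left j ⊗ₜ rb.left m))
            * g ((ρ' i).right j ⊗ₜ rb.right m) := by
        refine Finset.sum_congr rfl fun m _ => ?_
        have h1 := tri_swap
          ((TensorProduct.curry g).compl₁₂ (antipode (R := k))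
            (f ∘ₗ (TensorProduct.mk k H H).flip (rb.left m)))
          (g ∘ₗ (TensorProduct.mk k H H).flip (rb.right m)) a ra ρ ρ'
        simpa using h1
    _ = ∑ i ∈ ra.index, g ((antipode (R := k) (ra.left i) * ra.right i) ⊗ₜ b) := by
        rw [Finset.sum_comm]
        refine Finset.sum_congr rfl fun i _ => ?_
        rw [mp3' f g h (antipode (R := k) (ra.left i)) (ra.right i) b (ρ' i) rb]
        exact Finset.sum_comm
    _ = g (((counit (R := k) a) • (1 : H)) ⊗ₜ b) := by
        rw [← HopfAlgebra.sum_antipode_mul_eq_smul (R := k) ra, sum_tmul, map_sum]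
    _ = (counit (R := k) a * counit (R := k) b) • (1 : H) := by
        rw [← smul_tmul', map_smul, h.mp4 b, smul_smul]

lemma stmt1_main (f g : H ⊗[k] H →ₗ[k] H) (h : IsMatchedPairOfActions k H f g)
    (x y : H) :
    antipode (R := k) (g (x ⊗ₜ y)) = Umap f g (x ⊗ₜ y) := by
  set rx : Coalgebra.Repr k x (H × H) := ℛ k x with hrx
  set ry : Coalgebra.Repr k y (H × H) := ℛ k y with hry
  set ρ : ∀ i, Coalgebra.Repr k (rx.left i) (H × H) := fun i => ℛ k (rx.left i) with hρ
  set ρ' : ∀ i, Coalgebra.Repr k (rx.right i) (H × H) := fun i => ℛ k (rx.right i) with hρ'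
  set σ : ∀ m, Coalgebra.Repr k (ry.left m) (H × H) := fun m => ℛ k (ry.left m) with hσ
  set σ' : ∀ m, Coalgebra.Repr k (ry.right m) (H × H) := fun m => ℛ k (ry.right m) with hσ'
  calc
    antipode (R := k) (g (x ⊗ₜ y))
      = ∑ i ∈ rx.index, ∑ m ∈ ry.index,
          counit (R := k) (rx.left i) •
            counit (R := k) (ry.left m) •
              antipode (R := k) (g (rx.right i ⊗ₜ ry.right m)) := by
        have e0 := apply_sum_smul (antipode (R := k) ∘ₗ g) rx.index ry.index
          (fun i => counit (R := k) (rx.left i)) (fun m => counit (R := k) (ry.left m))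
          (fun i => rx.right i) (fun m => ry.right m)
        simp only [sum_counit_smul_right x rx, sum_counit_smul_right y ry] at e0
        simpa using e0
    _ = ∑ i ∈ rx.index, ∑ m ∈ ry.index,
          (∑ j ∈ (ρ i).index, ∑ n ∈ (σ m).index,
            Umap f g ((ρ i).left j ⊗ₜ (σ m).left n) * g ((ρ i).right j ⊗ₜ (σ m).right n))
            * antipode (R := k) (g (rx.right i ⊗ₜ ry.right m)) := by
        refine Finset.sum_congr rfl fun i _ => Finset.sum_congr rfl fun m _ => ?_
        rw [convA f g h (rx.left i) (ry.left m) (ρ i) (σ m)]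
        rw [smul_mul_assoc, one_mul, mul_smul]
    _ = ∑ i ∈ rx.index, ∑ m ∈ ry.index, ∑ j ∈ (ρ i).index, ∑ n ∈ (σ m).index,
          Umap f g ((ρ i).left j ⊗ₜ (σ m).left n) * g ((ρ i).right j ⊗ₜ (σ m).right n)
            * antipode (R := k) (g (rx.right i ⊗ₜ ry.right m)) := by
        refine Finset.sum_congr rfl fun i _ => Finset.sum_congr rfl fun m _ => ?_
        rw [Finset.sum_mul]
        exact Finset.sum_congr rfl fun j _ => by rw [Finset.sum_mul]
    _ = ∑ m ∈ ry.index, ∑ n ∈ (σ m).index, ∑ i ∈ rx.index, ∑ j ∈ (ρ i).index,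
          Umap f g ((ρ i).left j ⊗ₜ (σ m).left n) * g ((ρ i).right j ⊗ₜ (σ m).right n)
            * antipode (R := k) (g (rx.right i ⊗ₜ ry.right m)) :=
        sum4_swap rx.index ry.index (fun i => (ρ i).index) (fun m => (σ m).index) _
    _ = ∑ m ∈ ry.index, ∑ n ∈ (σ m).index, ∑ i ∈ rx.index, ∑ j ∈ (ρ' i).index,
          Umap f g (rx.left i ⊗ₜ (σ m).left n) * g ((ρ' i).left j ⊗ₜ (σ m).right n)
            * antipode (R := k) (g ((ρ' i).right j ⊗ₜ ry.right m)) := by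
        refine Finset.sum_congr rfl fun m _ => Finset.sum_congr rfl fun n _ => ?_
        have h1 := tri_swap
          ((LinearMap.mul k H).compl₁₂
            (Umap f g ∘ₗ (TensorProduct.mk k H H).flip ((σ m).left n))
            (g ∘ₗ (TensorProduct.mk k H H).flip ((σ m).right n)))
          (antipode (R := k) ∘ₗ g ∘ₗ (TensorProduct.mk k H H).flip (ry.right m))
          x rx ρ ρ'
        simpa using h1
    _ = ∑ i ∈ rx.index, ∑ j ∈ (ρ' i).index, ∑ m ∈ ry.index, ∑ n ∈ (σ m).index,
          Umap f g (rx.left i ⊗ₜ (σ m).left n) * g ((ρ' i).left j ⊗ₜ (σ m).right n)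
            * antipode (R := k) (g ((ρ' i).right j ⊗ₜ ry.right m)) :=
        sum4_swap' rx.index ry.index (fun i => (ρ' i).index) (fun m => (σ m).index) _
    _ = ∑ i ∈ rx.index, ∑ j ∈ (ρ' i).index, ∑ m ∈ ry.index, ∑ n ∈ (σ' m).index,
          Umap f g (rx.left i ⊗ₜ ry.left m) * g ((ρ' i).left j ⊗ₜ (σ' m).left n)
            * antipode (R := k) (g ((ρ' i).right j ⊗ₜ (σ' m).right n)) := by
        refine Finset.sum_congr rfl fun i _ => Finset.sum_congr rfl fun j _ => ?_
        have h1 := tri_swap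
          ((LinearMap.mul k H).compl₁₂
            (Umap f g ∘ₗ TensorProduct.mk k H H (rx.left i))
            (g ∘ₗ TensorProduct.mk k H H ((ρ' i).left j)))
          (antipode (R := k) ∘ₗ g ∘ₗ TensorProduct.mk k H H ((ρ' i).right j))
          y ry σ σ'
        simpa using h1
    _ = ∑ i ∈ rx.index, ∑ m ∈ ry.index,
          Umap f g (rx.left i ⊗ₜ ry.left m) *
            (∑ j ∈ (ρ' i).index, ∑ n ∈ (σ' m).index,
              g ((ρ' i).left j ⊗ₜ (σ' m).left n)
                * antipode (R := k) (g ((ρ' i).right j ⊗ₜ (σ' m).right n))) := by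
        refine Finset.sum_congr rfl fun i _ => ?_
        rw [Finset.sum_comm]
        refine Finset.sum_congr rfl fun m _ => ?_
        rw [Finset.mul_sum]
        refine Finset.sum_congr rfl fun j _ => ?_
        rw [Finset.mul_sum]
        exact Finset.sum_congr rfl fun n _ => mul_assoc _ _ _
    _ = ∑ i ∈ rx.index, ∑ m ∈ ry.index,
          counit (R := k) (rx.right i) • counit (R := k) (ry.right m) •
            Umap f g (rx.left i ⊗ₜ ry.left m) := by
        refine Finset.sum_congr rfl fun i _ => Finset.sum_congr rfl fun m _ => ?_
        rw [convB f g h (rx.right i) (ry.right m) (ρ' i) (σ' m)]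
        rw [mul_smul_comm, mul_one, mul_smul]
    _ = Umap f g (x ⊗ₜ y) := by
        have e10 := apply_sum_smul (Umap f g) rx.index ry.index
          (fun i => counit (R := k) (rx.right i)) (fun m => counit (R := k) (ry.right m))
          (fun i => rx.left i) (fun m => ry.left m)
        simp only [sum_counit_smul_left x rx, sum_counit_smul_left y ry] at e10
        exact e10.symm

end Aux


/-- For a matched pair of actions `(H, ⇀, ↼)` on a Hopf algebra `H`,
`S(x ↼ y) = S(x₁) ↼ (x₂ ⇀ y)`. -/
theorem stmt1 (f g : H ⊗[k] H →ₗ[k] H) (h : IsMatchedPairOfActions k H f g)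
    (x y : H) {ι : Type*} (rx : Coalgebra.Repr k x ι) :
    antipode (R := k) (g (x ⊗ₜ y)) =
      ∑ i ∈ rx.index, g (antipode (R := k) (rx.left i) ⊗ₜ f (rx.right i ⊗ₜ y)) := by
  rw [stmt1_main f g h x y, Umap_tmul f g x y rx]

end
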